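/- Let h = h(t,x,v) satisfy at a fixed t the boundary conditions h(t,0,v) = k₀₀ h(t,0,−v) + k₁₀ h(t,1,v) for v > 0 and h(t,1,v) = k₀₁ h(t,0,v) + k₁₁ h(t,1,−v) for v < 0, together with ∂_x h(t,0,v) = −k₀₀ ∂_x h(t,0,−v) + k₁₀ ∂_x h(t,1,v) for v > 0 and ∂_x h(t,1,v) = k₀₁ ∂_x h(t,0,v) − k₁₁ ∂_x h(t,1,−v) for v < 0, with |v|h(t,x,·)² and |v|(∂_x h)(t,x,·)² integrable for x ∈ {0,1}. Assume 1 − k₁₁ = k₁₀ = 1 − k₀₀ (so k₀₀ = k₁₁) and k₀₁ = 1 − k₁₁. Then −u∂_x u(t,1) + u∂_x u(t,0) ≤ 4(|1 − k₁₁|√B + |1 − k₀₀|√A)(|k₀₀|√A_x + |k₁₁|√B_x), where u(t,x) = ∫_ℝ v h√M dv. -/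

import Mathlib

open MeasureTheory Real Set

/-- The global Maxwellian `M(v) = (2π)^{-1/2} e^{-v²/2}`. -/
noncomputable def Mw (v : ℝ) : ℝ := (Real.sqrt (2 * Real.pi))⁻¹ * Real.exp (-(v ^ 2) / 2)

/-- `√M`. -/
noncomputable def sM (v : ℝ) : ℝ := Real.sqrt (Mw v)

/-- Squared `L²` norm on `Ω = [0,1] × ℝ`: `‖g‖² = ∫₀¹ ∫_ℝ g² dv dx`. -/
noncomputable def nSq (g : ℝ → ℝ → ℝ) : ℝ := ∫ x in (0:ℝ)..1, ∫ v : ℝ, (g x v) ^ 2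

/-- Partial derivative in the spatial variable `x`. -/
noncomputable def pdx (g : ℝ → ℝ → ℝ) : ℝ → ℝ → ℝ := fun x v => deriv (fun y => g y v) x

/-- `‖g‖_V² = ‖g‖² + ‖∂ₓ g‖²`. -/
noncomputable def nVSq (g : ℝ → ℝ → ℝ) : ℝ := nSq g + nSq (pdx g)

/-- `‖g‖_ω² = ‖g‖² + ‖∂_v g‖² + ‖v g‖²`. -/
noncomputable def nOmSq (g : ℝ → ℝ → ℝ) : ℝ :=
  nSq g + nSq (fun x v => deriv (g x) v) + nSq (fun x v => v * g x v)

/-- The weighted projection `(Πg)(x,v) = (∫_ℝ g(x,w)√M(w) dw)√M(v)`. -/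
noncomputable def Proj (g : ℝ → ℝ → ℝ) : ℝ → ℝ → ℝ := fun x v => (∫ w : ℝ, g x w * sM w) * sM v

/-- Boundary functional `A(t) = −∫_{-∞}^0 (v/2) h(t,0,v)² dv`. -/
noncomputable def Abd (h : ℝ → ℝ → ℝ → ℝ) (t : ℝ) : ℝ := -∫ v in Iio (0:ℝ), (v / 2) * (h t 0 v) ^ 2

/-- Boundary functional `B(t) = ∫_0^∞ (v/2) h(t,1,v)² dv`. -/
noncomputable def Bbd (h : ℝ → ℝ → ℝ → ℝ) (t : ℝ) : ℝ := ∫ v in Ioi (0:ℝ), (v / 2) * (h t 1 v) ^ 2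

/-- Boundary functional `A_x(t) = −∫_{-∞}^0 (v/2) (∂ₓh)(t,0,v)² dv`. -/
noncomputable def Axbd (h : ℝ → ℝ → ℝ → ℝ) (t : ℝ) : ℝ :=
  -∫ v in Iio (0:ℝ), (v / 2) * (pdx (h t) 0 v) ^ 2

/-- Boundary functional `B_x(t) = ∫_0^∞ (v/2) (∂ₓh)(t,1,v)² dv`. -/
noncomputable def Bxbd (h : ℝ → ℝ → ℝ → ℝ) (t : ℝ) : ℝ :=
  ∫ v in Ioi (0:ℝ), (v / 2) * (pdx (h t) 1 v) ^ 2

/-- `C_B(t) = ((√A−√B)² + (√Aₓ−√Bₓ)²)/(2(√A+√B)(√Aₓ+√Bₓ))`. -/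
noncomputable def CB (h : ℝ → ℝ → ℝ → ℝ) (t : ℝ) : ℝ :=
  ((Real.sqrt (Abd h t) - Real.sqrt (Bbd h t)) ^ 2
      + (Real.sqrt (Axbd h t) - Real.sqrt (Bxbd h t)) ^ 2) /
    (2 * (Real.sqrt (Abd h t) + Real.sqrt (Bbd h t))
      * (Real.sqrt (Axbd h t) + Real.sqrt (Bxbd h t)))

/-- The macroscopic density `σ(t,x) = ∫_ℝ h √M dv`. -/
noncomputable def dens (h : ℝ → ℝ → ℝ → ℝ) (t x : ℝ) : ℝ := ∫ v : ℝ, h t x v * sM v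

/-- The macroscopic flux `u(t,x) = ∫_ℝ v h √M dv`. -/
noncomputable def flux (h : ℝ → ℝ → ℝ → ℝ) (t x : ℝ) : ℝ := ∫ v : ℝ, v * h t x v * sM v

/-- The weighted VFP equation `ε ∂ₜh + v ∂ₓh − (1/ε) L h = E (∂ᵥ − v/2) h` on
`[0,∞) × [0,1] × ℝ`, with `L h = (1/2)h − (v²/4)h + ∂ᵥ²h` in strong form. -/
def IsVFPSolution (ε : ℝ) (E : ℝ → ℝ → ℝ) (h : ℝ → ℝ → ℝ → ℝ) : Prop :=
  ∀ t ≥ (0:ℝ), ∀ x ∈ Icc (0:ℝ) 1, ∀ v : ℝ,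
    ε * deriv (fun s => h s x v) t + v * deriv (fun y => h t y v) x
        - (1 / ε) * ((1 / 2) * h t x v - (v ^ 2 / 4) * h t x v + deriv (deriv (h t x)) v)
      = E t x * (deriv (h t x) v - (v / 2) * h t x v)

/-- boundary estimate for the flux term:
`−u∂ₓu(t,1) + u∂ₓu(t,0) ≤ 4(|1−k₁₁|√B + |1−k₀₀|√A)(|k₀₀|√Aₓ + |k₁₁|√Bₓ)`
for feedback entries with `1 − k₁₁ = k₁₀ = 1 − k₀₀` and `k₀₁ = 1 − k₁₁`. -/
lemma Mw_nonneg (v : ℝ) : 0 ≤ Mw v :=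
  mul_nonneg (inv_nonneg.2 (Real.sqrt_nonneg _)) (Real.exp_pos _).le

lemma sM_nonneg (v : ℝ) : 0 ≤ sM v := Real.sqrt_nonneg _

lemma sM_sq (v : ℝ) : sM v ^ 2 = Mw v := Real.sq_sqrt (Mw_nonneg v)

lemma sM_even (v : ℝ) : sM (-v) = sM v := by unfold sM Mw; rw [neg_pow]; norm_num

lemma sM_cont : Continuous sM := Real.continuous_sqrt.comp
  (continuous_const.mul (Real.continuous_exp.comp (by continuity)))

lemma exp_form (v : ℝ) : Real.exp (-(1/2) * v ^ 2) = Real.exp (-(v ^ 2) / 2) := by ring_nf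

lemma Mw_int : Integrable (fun v : ℝ => |v| * Mw v) := by
  have h := (integrable_mul_exp_neg_mul_sq (by norm_num : (0:ℝ) < 1/2)).abs
  have h2 : Integrable (fun v : ℝ => (Real.sqrt (2 * Real.pi))⁻¹ *
      |v * Real.exp (-(1/2) * v ^ 2)|) := h.const_mul _
  have heq : (fun v : ℝ => |v| * Mw v) = fun v : ℝ => (Real.sqrt (2 * Real.pi))⁻¹ *
      |v * Real.exp (-(1/2) * v ^ 2)| := by
    funext v
    rw [abs_mul, abs_of_nonneg (Real.exp_pos _).le, exp_form]
    unfold Mw; ring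
  rw [heq]; exact h2

lemma xexp_int : IntegrableOn (fun x : ℝ => x * Real.exp (-(x ^ 2) / 2)) (Ioi 0) := by
  have h := integrable_mul_exp_neg_mul_sq (by norm_num : (0:ℝ) < 1/2)
  simp_rw [exp_form] at h
  exact h.integrableOn

lemma xexp_integral : ∫ x in Ioi (0:ℝ), x * Real.exp (-(x ^ 2) / 2) = 1 := by
  have hd : ∀ x ∈ Ici (0:ℝ), HasDerivAt (fun y : ℝ => -Real.exp (-(y ^ 2) / 2))
      (x * Real.exp (-(x ^ 2) / 2)) x := by
    intro x _
    have h1 : HasDerivAt (fun y : ℝ => -(y ^ 2) / 2) (-x) x := by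
      have := ((hasDerivAt_pow 2 x).neg).div_const 2
      refine this.congr_deriv ?_
      push_cast; ring
    have h2 := (h1.exp).neg
    refine h2.congr_deriv ?_
    ring
  have hlim : Filter.Tendsto (fun y : ℝ => -Real.exp (-(y ^ 2) / 2)) Filter.atTop (nhds 0) := by
    rw [show (0:ℝ) = -0 by norm_num]
    apply Filter.Tendsto.neg
    apply Real.tendsto_exp_atBot.comp
    have h1 : Filter.Tendsto (fun y : ℝ => y ^ 2) Filter.atTop Filter.atTop :=
      Filter.tendsto_pow_atTop (by norm_num)
    have h2 := (h1.atTop_div_const (by norm_num : (0:ℝ) < 2))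
    have h3 := Filter.tendsto_neg_atTop_atBot.comp h2
    have heq : (fun y : ℝ => -(y ^ 2) / 2) = (Neg.neg ∘ fun x : ℝ => x ^ 2 / 2) := by
      funext y; simp [Function.comp, neg_div]
    rw [heq]; exact h3
  have := integral_Ioi_of_hasDerivAt_of_tendsto' hd xexp_int hlim
  simpa using this

lemma Mw_moment : ∫ v : ℝ, |v| * Mw v ≤ 1 := by
  have habs : ∫ v : ℝ, |v| * Real.exp (-(v ^ 2) / 2) = 2 := by
    have := integral_comp_abs (f := fun x : ℝ => x * Real.exp (-(x ^ 2) / 2))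
    simp_rw [sq_abs] at this
    rw [this, xexp_integral]; norm_num
  have heq : (fun v : ℝ => |v| * Mw v)
      = fun v : ℝ => (Real.sqrt (2 * Real.pi))⁻¹ * (|v| * Real.exp (-(v ^ 2) / 2)) := by
    funext v; unfold Mw; ring
  rw [heq, integral_const_mul, habs]
  have h2 : (2:ℝ) ≤ Real.sqrt (2 * Real.pi) := by
    nlinarith [Real.sq_sqrt (show (0:ℝ) ≤ 2 * Real.pi by positivity),
      Real.sqrt_nonneg (2 * Real.pi), Real.pi_gt_three]
  have hpos : (0:ℝ) < Real.sqrt (2 * Real.pi) := lt_of_lt_of_le (by norm_num) h2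
  rw [inv_mul_le_iff₀ hpos]
  linarith

/-- Cauchy–Schwarz boundary bound. -/
lemma cs_bd (S : Set ℝ) (φ : ℝ → ℝ)
    (hi2 : Integrable (fun v : ℝ => |v| * φ v ^ 2)) :
    |∫ v in S, v * φ v * sM v| ≤
      Real.sqrt 2 * Real.sqrt (∫ v in S, (|v| / 2) * φ v ^ 2) := by
  set f : ℝ → ℝ := fun v => Real.sqrt (|v| * φ v ^ 2) with hf
  set g : ℝ → ℝ := fun v => Real.sqrt |v| * sM v with hg
  have hfg : ∀ v : ℝ, |v * φ v * sM v| = f v * g v := by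
    intro v
    have h1 : f v = Real.sqrt |v| * |φ v| := by
      rw [hf]; simp only; rw [Real.sqrt_mul (abs_nonneg v), Real.sqrt_sq_eq_abs]
    have h2 : Real.sqrt |v| * Real.sqrt |v| = |v| := Real.mul_self_sqrt (abs_nonneg v)
    rw [h1, hg]
    simp only
    rw [abs_mul, abs_mul, abs_of_nonneg (sM_nonneg v)]
    ring_nf
    rw [Real.sq_sqrt (abs_nonneg v)]
    ring
  have hfsq : ∀ v : ℝ, f v ^ 2 = |v| * φ v ^ 2 := by
    intro v; rw [hf]; exact Real.sq_sqrt (by positivity)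
  have hgsq : ∀ v : ℝ, g v ^ 2 = |v| * Mw v := by
    intro v; rw [hg]; simp only
    rw [mul_pow, Real.sq_sqrt (abs_nonneg v), sM_sq]
  have hfm : AEStronglyMeasurable f (volume.restrict S) :=
    (Real.continuous_sqrt.comp_aestronglyMeasurable hi2.aestronglyMeasurable).restrict
  have hgc : Continuous g := (Real.continuous_sqrt.comp continuous_abs).mul sM_cont
  have hfL2 : MemLp f (ENNReal.ofReal 2) (volume.restrict S) := by
    rw [show ENNReal.ofReal 2 = 2 by norm_num]
    refine (memLp_two_iff_integrable_sq hfm).2 ?_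
    have : Integrable (fun v => f v ^ 2) (volume.restrict S) := by
      simp_rw [hfsq]; exact hi2.restrict
    exact this
  have hgL2 : MemLp g (ENNReal.ofReal 2) (volume.restrict S) := by
    rw [show ENNReal.ofReal 2 = 2 by norm_num]
    refine (memLp_two_iff_integrable_sq hgc.aestronglyMeasurable.restrict).2 ?_
    have : Integrable (fun v => g v ^ 2) (volume.restrict S) := by
      simp_rw [hgsq]; exact Mw_int.restrict
    exact this
  have hpq : Real.HolderConjugate 2 2 := Real.holderConjugate_iff.mpr ⟨by norm_num, by norm_num⟩
  have hcs := integral_mul_le_Lp_mul_Lq_of_nonneg (μ := volume.restrict S) hpq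
    (Filter.Eventually.of_forall (fun v => Real.sqrt_nonneg _))
    (Filter.Eventually.of_forall (fun v => by
      exact mul_nonneg (Real.sqrt_nonneg _) (sM_nonneg v))) hfL2 hgL2
  have hrw : ∀ (F : ℝ → ℝ), (∫ v in S, F v ^ (2:ℝ)) = ∫ v in S, F v ^ 2 := by
    intro F
    congr 1; funext v
    rw [show ((2:ℝ)) = ((2:ℕ):ℝ) by norm_num, Real.rpow_natCast]
  rw [hrw f, hrw g] at hcs
  calc |∫ v in S, v * φ v * sM v|
      ≤ ∫ v in S, |v * φ v * sM v| := by
        have := norm_integral_le_integral_norm (μ := volume.restrict S)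
          (f := fun v => v * φ v * sM v)
        simp only [Real.norm_eq_abs] at this
        exact this
    _ = ∫ v in S, f v * g v := by congr 1; funext v; exact hfg v
    _ ≤ (∫ v in S, f v ^ 2) ^ ((1:ℝ)/2) * (∫ v in S, g v ^ 2) ^ ((1:ℝ)/2) := hcs
    _ ≤ Real.sqrt 2 * Real.sqrt (∫ v in S, (|v| / 2) * φ v ^ 2) := by
        have h1 : (∫ v in S, f v ^ 2) = 2 * ∫ v in S, (|v| / 2) * φ v ^ 2 := by
          rw [← integral_const_mul]
          congr 1; funext v; rw [hfsq]; ring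
        have h2 : (∫ v in S, g v ^ 2) ≤ 1 := by
          calc (∫ v in S, g v ^ 2) = ∫ v in S, |v| * Mw v := by
                congr 1; funext v; exact hgsq v
            _ ≤ ∫ v : ℝ, |v| * Mw v := setIntegral_le_integral Mw_int
                (Filter.Eventually.of_forall (fun v =>
                  mul_nonneg (abs_nonneg v) (Mw_nonneg v)))
            _ ≤ 1 := Mw_moment
        have hXnn : 0 ≤ ∫ v in S, (|v| / 2) * φ v ^ 2 :=
          integral_nonneg (fun v => by positivity)
        have e1 : (∫ v in S, f v ^ 2) ^ ((1:ℝ)/2)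
            = Real.sqrt 2 * Real.sqrt (∫ v in S, (|v| / 2) * φ v ^ 2) := by
          rw [h1, ← Real.sqrt_eq_rpow, Real.sqrt_mul (by norm_num)]
        have e2 : (∫ v in S, g v ^ 2) ^ ((1:ℝ)/2) ≤ 1 := by
          rw [← Real.sqrt_eq_rpow]
          exact Real.sqrt_le_one.2 h2
        rw [e1]
        have hnn : (0:ℝ) ≤ Real.sqrt 2 * Real.sqrt (∫ v in S, (|v| / 2) * φ v ^ 2) := by
          positivity
        nlinarith [Real.rpow_nonneg (integral_nonneg (μ := volume.restrict S)
          (fun v => sq_nonneg (g v))) ((1:ℝ)/2)]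

lemma refl_Ioi (φ : ℝ → ℝ) :
    ∫ v in Ioi (0:ℝ), v * φ (-v) * sM v = - ∫ v in Iio (0:ℝ), v * φ v * sM v := by
  calc ∫ v in Ioi (0:ℝ), v * φ (-v) * sM v
      = ∫ x in Ioi (0:ℝ), (fun w : ℝ => -(w * φ w * sM w)) (-x) := by
        apply setIntegral_congr_fun measurableSet_Ioi
        intro v _
        show v * φ (-v) * sM v = -((-v) * φ (-v) * sM (-v))
        rw [sM_even]; ring
    _ = ∫ x in Iic (-(0:ℝ)), (fun w : ℝ => -(w * φ w * sM w)) x := by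
        exact integral_comp_neg_Ioi 0 (fun w : ℝ => -(w * φ w * sM w))
    _ = - ∫ v in Iio (0:ℝ), v * φ v * sM v := by
        rw [show (-(0:ℝ)) = 0 by norm_num, integral_Iic_eq_integral_Iio]
        exact integral_neg _

lemma refl_Iio (φ : ℝ → ℝ) :
    ∫ v in Iio (0:ℝ), v * φ (-v) * sM v = - ∫ v in Ioi (0:ℝ), v * φ v * sM v := by
  calc ∫ v in Iio (0:ℝ), v * φ (-v) * sM v
      = ∫ x in Iic (0:ℝ), (fun w : ℝ => -(w * φ w * sM w)) (-x) := by
        rw [integral_Iic_eq_integral_Iio]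
        apply setIntegral_congr_fun measurableSet_Iio
        intro v _
        show v * φ (-v) * sM v = -((-v) * φ (-v) * sM (-v))
        rw [sM_even]; ring
    _ = ∫ x in Ioi (-(0:ℝ)), (fun w : ℝ => -(w * φ w * sM w)) x := by
        exact integral_comp_neg_Iic 0 (fun w : ℝ => -(w * φ w * sM w))
    _ = - ∫ v in Ioi (0:ℝ), v * φ v * sM v := by
        rw [show (-(0:ℝ)) = 0 by norm_num]
        exact integral_neg _

lemma refl_integrable (φ : ℝ → ℝ) (hφ : Integrable (fun v : ℝ => v * φ v * sM v)) :
    Integrable (fun v : ℝ => v * φ (-v) * sM v) := by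
  have h2 := hφ.comp_neg.neg
  have heq : (fun v : ℝ => v * φ (-v) * sM v)
      = fun v : ℝ => -((-v) * φ (-v) * sM (-v)) := by
    funext v; rw [sM_even]; ring
  rw [heq]; exact h2

lemma bc_integral_Ioi (φ ρ : ℝ → ℝ) (c d : ℝ)
    (hbc : ∀ v > (0:ℝ), φ v = c * φ (-v) + d * ρ v)
    (hφ : Integrable (fun v : ℝ => v * φ v * sM v))
    (hρ : Integrable (fun v : ℝ => v * ρ v * sM v)) :
    (∫ v : ℝ, v * φ v * sM v)
      = (1 - c) * (∫ v in Iio (0:ℝ), v * φ v * sM v)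
        + d * ∫ v in Ioi (0:ℝ), v * ρ v * sM v := by
  have hsplit : (∫ v : ℝ, v * φ v * sM v)
      = (∫ v in Iio (0:ℝ), v * φ v * sM v) + ∫ v in Ioi (0:ℝ), v * φ v * sM v := by
    rw [← intervalIntegral.integral_Iic_add_Ioi hφ.integrableOn hφ.integrableOn, integral_Iic_eq_integral_Iio]
  have hcongr : (∫ v in Ioi (0:ℝ), v * φ v * sM v)
      = ∫ v in Ioi (0:ℝ), (c * (v * φ (-v) * sM v) + d * (v * ρ v * sM v)) :=
    setIntegral_congr_fun measurableSet_Ioi (fun v hv => by rw [hbc v hv]; ring)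
  rw [hsplit, hcongr, integral_add ((refl_integrable φ hφ).integrableOn.const_mul c)
    (hρ.integrableOn.const_mul d), integral_const_mul, integral_const_mul, refl_Ioi]
  ring

lemma bc_integral_Iio (φ ρ : ℝ → ℝ) (c d : ℝ)
    (hbc : ∀ v < (0:ℝ), φ v = c * ρ v + d * φ (-v))
    (hφ : Integrable (fun v : ℝ => v * φ v * sM v))
    (hρ : Integrable (fun v : ℝ => v * ρ v * sM v)) :
    (∫ v : ℝ, v * φ v * sM v)
      = c * (∫ v in Iio (0:ℝ), v * ρ v * sM v)
        + (1 - d) * ∫ v in Ioi (0:ℝ), v * φ v * sM v := by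
  have hsplit : (∫ v : ℝ, v * φ v * sM v)
      = (∫ v in Iio (0:ℝ), v * φ v * sM v) + ∫ v in Ioi (0:ℝ), v * φ v * sM v := by
    rw [← intervalIntegral.integral_Iic_add_Ioi hφ.integrableOn hφ.integrableOn, integral_Iic_eq_integral_Iio]
  have hcongr : (∫ v in Iio (0:ℝ), v * φ v * sM v)
      = ∫ v in Iio (0:ℝ), (c * (v * ρ v * sM v) + d * (v * φ (-v) * sM v)) :=
    setIntegral_congr_fun measurableSet_Iio (fun v hv => by rw [hbc v hv]; ring)
  rw [hsplit, hcongr, integral_add (hρ.integrableOn.const_mul c)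
    ((refl_integrable φ hφ).integrableOn.const_mul d), integral_const_mul, integral_const_mul,
    refl_Iio]
  ring


lemma abs_Iio_eq (φ : ℝ → ℝ) :
    (∫ v in Iio (0:ℝ), (|v| / 2) * φ v ^ 2) = -∫ v in Iio (0:ℝ), (v / 2) * φ v ^ 2 := by
  rw [← integral_neg]
  apply setIntegral_congr_fun measurableSet_Iio
  intro v hv
  show |v| / 2 * φ v ^ 2 = -(v / 2 * φ v ^ 2)
  rw [abs_of_neg (show v < 0 from hv)]
  ring

lemma abs_Ioi_eq (φ : ℝ → ℝ) :
    (∫ v in Ioi (0:ℝ), (|v| / 2) * φ v ^ 2) = ∫ v in Ioi (0:ℝ), (v / 2) * φ v ^ 2 := by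
  apply setIntegral_congr_fun measurableSet_Ioi
  intro v hv
  show |v| / 2 * φ v ^ 2 = v / 2 * φ v ^ 2
  rw [abs_of_pos (show 0 < v from hv)]


lemma final_alg (a b al be sA sB sAx sBx k : ℝ)
    (ha : |a| ≤ Real.sqrt 2 * sA) (hb : |b| ≤ Real.sqrt 2 * sB)
    (hal : |al| ≤ Real.sqrt 2 * sAx) (hbe : |be| ≤ Real.sqrt 2 * sBx)
    (hA : 0 ≤ sA) (hB : 0 ≤ sB) (hAx : 0 ≤ sAx) (hBx : 0 ≤ sBx) :
    -(((1 - k) * a + (1 - k) * b) * ((1 - k) * al + (1 - -k) * be))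
        + ((1 - k) * a + (1 - k) * b) * ((1 - -k) * al + (1 - k) * be)
      ≤ 4 * (|1 - k| * sB + |1 - k| * sA) * (|k| * sAx + |k| * sBx) := by
  have hs2 : Real.sqrt 2 * Real.sqrt 2 = 2 := Real.mul_self_sqrt (by norm_num)
  have hsub : |al - be| ≤ |al| + |be| := by
    rw [sub_eq_add_neg]
    exact (abs_add_le _ _).trans (by rw [abs_neg])
  have eL1 : |(1 - k) * (a + b)| ≤ |1 - k| * (Real.sqrt 2 * sA + Real.sqrt 2 * sB) := by
    rw [abs_mul]
    exact mul_le_mul_of_nonneg_left ((abs_add_le a b).trans (add_le_add ha hb)) (abs_nonneg _)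
  have eL2 : |2 * k * (al - be)| ≤ 2 * (|k| * (Real.sqrt 2 * sAx + Real.sqrt 2 * sBx)) := by
    rw [abs_mul, abs_mul, abs_two, mul_assoc]
    exact mul_le_mul_of_nonneg_left
      (mul_le_mul_of_nonneg_left (hsub.trans (add_le_add hal hbe)) (abs_nonneg _))
      (by norm_num)
  calc -(((1 - k) * a + (1 - k) * b) * ((1 - k) * al + (1 - -k) * be))
        + ((1 - k) * a + (1 - k) * b) * ((1 - -k) * al + (1 - k) * be)
      = ((1 - k) * (a + b)) * (2 * k * (al - be)) := by ring
    _ ≤ |((1 - k) * (a + b)) * (2 * k * (al - be))| := le_abs_self _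
    _ = |(1 - k) * (a + b)| * |2 * k * (al - be)| := abs_mul _ _
    _ ≤ (|1 - k| * (Real.sqrt 2 * sA + Real.sqrt 2 * sB))
        * (2 * (|k| * (Real.sqrt 2 * sAx + Real.sqrt 2 * sBx))) :=
        mul_le_mul eL1 eL2 (abs_nonneg _) (by positivity)
    _ = 4 * (|1 - k| * sB + |1 - k| * sA) * (|k| * sAx + |k| * sBx) := by
        linear_combination (2 * |1 - k| * |k| * (sA + sB) * (sAx + sBx)) * hs2

theorem stmt18
    (h : ℝ → ℝ → ℝ → ℝ) (k00 k01 k10 k11 t : ℝ)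
    -- square integrability against |v| of h and ∂ₓh at the boundary
    (hint0 : Integrable (fun v : ℝ => |v| * (h t 0 v) ^ 2))
    (hint1 : Integrable (fun v : ℝ => |v| * (h t 1 v) ^ 2))
    (hintx0 : Integrable (fun v : ℝ => |v| * (pdx (h t) 0 v) ^ 2))
    (hintx1 : Integrable (fun v : ℝ => |v| * (pdx (h t) 1 v) ^ 2))
    -- integrability of the flux integrands
    (hu0 : Integrable (fun v : ℝ => v * h t 0 v * sM v))
    (hu1 : Integrable (fun v : ℝ => v * h t 1 v * sM v))
    (hux0 : Integrable (fun v : ℝ => v * pdx (h t) 0 v * sM v))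
    (hux1 : Integrable (fun v : ℝ => v * pdx (h t) 1 v * sM v))
    -- differentiation under the integral sign for the flux
    (hdiffux : ∀ x : ℝ, deriv (fun y => flux h t y) x = ∫ v : ℝ, v * pdx (h t) x v * sM v)
    -- boundary conditions for h and ∂ₓh
    (hbc0 : ∀ v > (0:ℝ), h t 0 v = k00 * h t 0 (-v) + k10 * h t 1 v)
    (hbc1 : ∀ v < (0:ℝ), h t 1 v = k01 * h t 0 v + k11 * h t 1 (-v))
    (hbcx0 : ∀ v > (0:ℝ), pdx (h t) 0 v = -k00 * pdx (h t) 0 (-v) + k10 * pdx (h t) 1 v)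
    (hbcx1 : ∀ v < (0:ℝ), pdx (h t) 1 v = k01 * pdx (h t) 0 v - k11 * pdx (h t) 1 (-v))
    (hk1 : 1 - k11 = k10) (hk2 : k10 = 1 - k00) (hk3 : k01 = 1 - k11) :
    -(flux h t 1 * deriv (fun y => flux h t y) 1)
        + flux h t 0 * deriv (fun y => flux h t y) 0
      ≤ 4 * (|1 - k11| * Real.sqrt (Bbd h t) + |1 - k00| * Real.sqrt (Abd h t))
          * (|k00| * Real.sqrt (Axbd h t) + |k11| * Real.sqrt (Bxbd h t)) := by
  subst hk2 hk3
  have hk : k11 = k00 := by linarith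
  subst hk
  have ha : |∫ v in Iio (0:ℝ), v * h t 0 v * sM v| ≤ Real.sqrt 2 * Real.sqrt (Abd h t) := by
    have := cs_bd (Iio (0:ℝ)) (h t 0) hint0
    rwa [abs_Iio_eq] at this
  have hb : |∫ v in Ioi (0:ℝ), v * h t 1 v * sM v| ≤ Real.sqrt 2 * Real.sqrt (Bbd h t) := by
    have := cs_bd (Ioi (0:ℝ)) (h t 1) hint1
    rwa [abs_Ioi_eq] at this
  have hal : |∫ v in Iio (0:ℝ), v * pdx (h t) 0 v * sM v|
      ≤ Real.sqrt 2 * Real.sqrt (Axbd h t) := by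
    have := cs_bd (Iio (0:ℝ)) (pdx (h t) 0) hintx0
    rwa [abs_Iio_eq] at this
  have hbe : |∫ v in Ioi (0:ℝ), v * pdx (h t) 1 v * sM v|
      ≤ Real.sqrt 2 * Real.sqrt (Bxbd h t) := by
    have := cs_bd (Ioi (0:ℝ)) (pdx (h t) 1) hintx1
    rwa [abs_Ioi_eq] at this
  have e0 : flux h t 0 = (1 - k11) * (∫ v in Iio (0:ℝ), v * h t 0 v * sM v)
      + (1 - k11) * ∫ v in Ioi (0:ℝ), v * h t 1 v * sM v :=
    bc_integral_Ioi (h t 0) (h t 1) k11 (1 - k11) hbc0 hu0 hu1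
  have e1 : flux h t 1 = (1 - k11) * (∫ v in Iio (0:ℝ), v * h t 0 v * sM v)
      + (1 - k11) * ∫ v in Ioi (0:ℝ), v * h t 1 v * sM v :=
    bc_integral_Iio (h t 1) (h t 0) (1 - k11) k11 hbc1 hu1 hu0
  have ex0 : deriv (fun y => flux h t y) 0
      = (1 - -k11) * (∫ v in Iio (0:ℝ), v * pdx (h t) 0 v * sM v)
        + (1 - k11) * ∫ v in Ioi (0:ℝ), v * pdx (h t) 1 v * sM v := by
    rw [hdiffux 0]
    exact bc_integral_Ioi (pdx (h t) 0) (pdx (h t) 1) (-k11) (1 - k11)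
      (fun v hv => hbcx0 v hv) hux0 hux1
  have ex1 : deriv (fun y => flux h t y) 1
      = (1 - k11) * (∫ v in Iio (0:ℝ), v * pdx (h t) 0 v * sM v)
        + (1 - -k11) * ∫ v in Ioi (0:ℝ), v * pdx (h t) 1 v * sM v := by
    rw [hdiffux 1]
    exact bc_integral_Iio (pdx (h t) 1) (pdx (h t) 0) (1 - k11) (-k11)
      (fun v hv => by rw [hbcx1 v hv]; ring) hux1 hux0
  rw [e0, e1, ex0, ex1]
  exact final_alg _ _ _ _ _ _ _ _ _ ha hb hal hbe (Real.sqrt_nonneg _) (Real.sqrt_nonneg _)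
    (Real.sqrt_nonneg _) (Real.sqrt_nonneg _)
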